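/- Let G = (V, E) be a finite connected simple graph, w : E → ℝ an injective weight function, and T the minimal spanning tree of (G, w). Fix u ∈ ℝ and let G^u be the subgraph of G with vertex set V and edge set {e ∈ E : w(e) ≤ u}. Let C be (the vertex set of) a connected component of G^u. Then the set of edges of T having both endpoints in C is the edge set of a spanning tree of the induced subgraph G[C], and this spanning tree is the minimal spanning tree of G[C] with respect to the restriction of w. -/

import Mathlib

/-- A spanning tree of a simple graph `G` on `V`: a graph on the same vertex set which is
a subgraph of `G` (i.e. `T ≤ G`), connected and acyclic. -/
def IsSpanningTree {V : Type*} (G T : SimpleGraph V) : Prop :=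
  T ≤ G ∧ T.Connected ∧ T.IsAcyclic

/-- The total weight of (the edges of) a graph `T` with respect to a weight function `w`. -/
noncomputable def treeWeight {V : Type*} [Finite V] (T : SimpleGraph V) (w : Sym2 V → ℝ) : ℝ :=
  ∑ e ∈ T.edgeSet.toFinite.toFinset, w e

/-- The percolation graph `G^u`: keep exactly the edges of `G` of weight at most `u`. -/
def percolate {V : Type*} (G : SimpleGraph V) (w : Sym2 V → ℝ) (u : ℝ) : SimpleGraph V where
  Adj a b := G.Adj a b ∧ w s(a, b) ≤ u
  symm := ⟨by
    intro a b h
    refine ⟨h.1.symm, ?_⟩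
    rw [Sym2.eq_swap]
    exact h.2⟩
  loopless := ⟨fun a h => G.loopless.irrefl a h.1⟩

namespace MSTAux

open SimpleGraph

variable {V : Type*}

lemma reach_of_delete {H : SimpleGraph V} {x₀ y₀ : V} :
    ∀ {v a : V} (_ : H.Walk v a) (_ : a = x₀ ∨ a = y₀),
      (H \ fromEdgeSet {s(x₀, y₀)}).Reachable v x₀ ∨
      (H \ fromEdgeSet {s(x₀, y₀)}).Reachable v y₀ := by
  intro v a p
  induction p with
  | nil => rintro (rfl | rfl) <;> [left; right] <;> rfl
  | @cons v v' b h p ih =>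
    intro hb
    have key : ∀ (c : V), (H \ fromEdgeSet {s(x₀, y₀)}).Reachable v' c →
        (H \ fromEdgeSet {s(x₀, y₀)}).Reachable v x₀ ∨
        (H \ fromEdgeSet {s(x₀, y₀)}).Reachable v y₀ ∨
        (H \ fromEdgeSet {s(x₀, y₀)}).Reachable v c := by
      intro c hr
      by_cases he : s(v, v') = s(x₀, y₀)
      · rw [Sym2.eq_iff] at he
        rcases he with ⟨rfl, rfl⟩ | ⟨rfl, rfl⟩
        · left; rfl
        · right; left; rfl
      · right; right
        refine (Adj.reachable ?_).trans hr
        simp only [sdiff_adj, fromEdgeSet_adj, Set.mem_singleton_iff]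
        exact ⟨h, fun hc => he hc.1⟩
    rcases ih hb with hr | hr
    · rcases key x₀ hr with h' | h' | h' <;> [exact Or.inl h'; exact Or.inr h'; exact Or.inl h']
    · rcases key y₀ hr with h' | h' | h' <;> [exact Or.inl h'; exact Or.inr h'; exact Or.inr h']

/-- If `H` is connected, `H` minus the edge `s(x₀,y₀)` is a subgraph of `H₂`, and `x₀,y₀` are
reachable in `H₂`, then `H₂` is connected. -/
lemma connected_of_delete {H H₂ : SimpleGraph V} {x₀ y₀ : V} (hH : H.Connected)
    (hle : H \ fromEdgeSet {s(x₀, y₀)} ≤ H₂) (hr : H₂.Reachable x₀ y₀) : H₂.Connected := by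
  have hne : Nonempty V := hH.nonempty
  rw [connected_iff]
  refine ⟨fun a b => ?_, hne⟩
  have key : ∀ v : V, H₂.Reachable v x₀ := by
    intro v
    rcases reach_of_delete ((hH v x₀).some) (Or.inl rfl) with h' | h'
    · exact h'.mono hle
    · exact (h'.mono hle).trans hr.symm
  exact (key a).trans (key b).symm

/-- In an acyclic graph, deleting an edge of a path disconnects the path's endpoints. -/
lemma not_reachable_delete_of_mem_path {T : SimpleGraph V} (hac : T.IsAcyclic)
    {x y : V} {p : T.Walk x y} (hp : p.IsPath) {f : Sym2 V} (hf : f ∈ p.edges) :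
    ¬(T \ fromEdgeSet {f}).Reachable x y := by
  classical
  rintro ⟨q⟩
  have hqe : ∀ e ∈ q.edges, e ∈ T.edgeSet := by
    intro e he
    have := q.edges_subset_edgeSet he
    rw [edgeSet_sdiff] at this
    exact this.1
  have hfq : f ∉ q.edges := by
    intro hc
    have := q.edges_subset_edgeSet hc
    rw [edgeSet_sdiff, edgeSet_fromEdgeSet] at this
    exact this.2 ⟨rfl, (T.not_isDiag_of_mem_edgeSet (hqe f hc))⟩
  set q' : T.Walk x y := q.transfer T hqe with hq'
  have hfq' : f ∉ q'.edges := by rwa [hq', Walk.edges_transfer]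
  have : (⟨p, hp⟩ : T.Path x y) = q'.toPath := hac.path_unique _ _
  have hfp : f ∈ (q'.toPath : T.Walk x y).edges := by
    rw [← this]; exact hf
  exact hfq' (q'.edges_toPath_subset hfp)

/-- Edge set of `H` minus one edge. -/
lemma edgeSet_delete_edge {H : SimpleGraph V} {x₀ y₀ : V} (h : H.Adj x₀ y₀) :
    (H \ fromEdgeSet {s(x₀, y₀)}).edgeSet = H.edgeSet \ {s(x₀, y₀)} := by
  clear h
  rw [edgeSet_sdiff, edgeSet_fromEdgeSet]
  ext e
  simp only [Set.mem_diff, Set.mem_singleton_iff, Set.mem_setOf_eq, not_and, not_not]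
  constructor
  · rintro ⟨he, h2⟩
    refine ⟨he, fun hc => ?_⟩
    have := h2 hc
    subst hc
    exact (H.not_isDiag_of_mem_edgeSet he) this
  · rintro ⟨he, h2⟩
    exact ⟨he, fun hc => absurd hc h2⟩

lemma card_le_ncard_add_one [Fintype V] :
    ∀ (n : ℕ) (H : SimpleGraph V), H.edgeSet.ncard = n → H.Connected →
      Fintype.card V ≤ n + 1 := by
  intro n
  induction n using Nat.strong_induction_on with
  | _ n ih =>
    intro H hn hconn
    by_cases hac : H.IsAcyclic
    · haveI : Fintype H.edgeSet := Fintype.ofFinite _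
      have ht : H.IsTree := ⟨hconn, hac⟩
      have h1 := ht.card_edgeFinset
      have h2 : H.edgeFinset.card = n := by
        rw [← hn, Set.ncard_eq_toFinset_card']
        rfl
      omega
    · rw [SimpleGraph.isAcyclic_iff_forall_edge_isBridge] at hac
      push_neg at hac
      obtain ⟨e, he, hbr⟩ := hac
      revert he hbr
      induction e using Sym2.ind with
      | _ x₀ y₀ =>
        intro he hbr
        rw [isBridge_iff] at hbr
        have hadj : H.Adj x₀ y₀ := he
        have hr : (H \ fromEdgeSet {s(x₀, y₀)}).Reachable x₀ y₀ := by
          by_contra hc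
          exact hbr hc
        have hc' : (H \ fromEdgeSet {s(x₀, y₀)}).Connected :=
          connected_of_delete hconn le_rfl hr
        have hE : (H \ fromEdgeSet {s(x₀, y₀)}).edgeSet = H.edgeSet \ {s(x₀, y₀)} :=
          edgeSet_delete_edge hadj
        have hpos : 1 ≤ n := by
          rw [← hn]
          exact (Set.ncard_pos (H.edgeSet.toFinite)).mpr ⟨_, he⟩
        have hcard : (H \ fromEdgeSet {s(x₀, y₀)}).edgeSet.ncard = n - 1 := by
          rw [hE, Set.ncard_diff_singleton_of_mem he, hn]
        have := ih (n - 1) (by omega) _ hcard hc'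
        omega

lemma isAcyclic_of_card [Fintype V] {H : SimpleGraph V} (hconn : H.Connected)
    (hc : H.edgeSet.ncard + 1 ≤ Fintype.card V) : H.IsAcyclic := by
  by_contra hac
  rw [SimpleGraph.isAcyclic_iff_forall_edge_isBridge] at hac
  push_neg at hac
  obtain ⟨e, he, hbr⟩ := hac
  revert he hbr
  induction e using Sym2.ind with
  | _ x₀ y₀ =>
    intro he hbr
    rw [isBridge_iff] at hbr
    have hadj : H.Adj x₀ y₀ := he
    have hr : (H \ fromEdgeSet {s(x₀, y₀)}).Reachable x₀ y₀ := by
      by_contra hcc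
      exact hbr hcc
    have hc' : (H \ fromEdgeSet {s(x₀, y₀)}).Connected :=
      connected_of_delete hconn le_rfl hr
    have hpos : 1 ≤ H.edgeSet.ncard :=
      (Set.ncard_pos (H.edgeSet.toFinite)).mpr ⟨_, he⟩
    have hcard : (H \ fromEdgeSet {s(x₀, y₀)}).edgeSet.ncard = H.edgeSet.ncard - 1 := by
      rw [edgeSet_delete_edge hadj, Set.ncard_diff_singleton_of_mem he]
    have := card_le_ncard_add_one _ _ hcard hc'
    omega

/-- Cut property: every edge on the `T`-path between `G`-adjacent `x, y` with
`w s(x,y) ≤ u` has weight at most `u`, when `T` is a minimal spanning tree. -/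
lemma exists_light_tree_walk [Fintype V]
    {G : SimpleGraph V} (w : Sym2 V → ℝ)
    {T : SimpleGraph V} (hT : IsSpanningTree G T)
    (hmin : ∀ T' : SimpleGraph V, IsSpanningTree G T' →
      treeWeight T w ≤ treeWeight T' w)
    {u : ℝ} {x y : V} (hxy : G.Adj x y) (hwxy : w s(x, y) ≤ u) :
    ∃ p : T.Walk x y, ∀ e ∈ p.edges, w e ≤ u := by
  classical
  obtain ⟨hle, hconn, hac⟩ := hT
  obtain ⟨p, hp⟩ := ((hconn.preconnected x y).some.toPath : T.Path x y)
  refine ⟨p, fun f hf => ?_⟩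
  by_contra hfu
  push_neg at hfu
  have hfT : f ∈ T.edgeSet := p.edges_subset_edgeSet hf
  revert hf hfT
  induction f using Sym2.ind with
  | _ x₀ y₀ =>
    intro hf hfT
    have hadjT : T.Adj x₀ y₀ := hfT
    have hd : ¬(T \ fromEdgeSet {s(x₀, y₀)}).Reachable x y :=
      not_reachable_delete_of_mem_path hac hp hf
    have hne : x ≠ y := G.ne_of_adj hxy
    have hxyT : s(x, y) ∉ T.edgeSet := by
      intro hc
      have hps : (⟨p, hp⟩ : T.Path x y) = Path.singleton hc := hac.path_unique _ _
      have : p = Walk.cons hc Walk.nil := congrArg Subtype.val hps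
      rw [this] at hf
      simp only [Walk.edges_cons, Walk.edges_nil, List.mem_singleton] at hf
      have hf' : s(x₀, y₀) = s(x, y) := List.mem_singleton.mp hf
      rw [hf'] at hfu
      exact absurd hwxy (not_le.mpr hfu)
    set T' : SimpleGraph V := (T \ fromEdgeSet {s(x₀, y₀)}) ⊔ fromEdgeSet {s(x, y)} with hT'def
    have hsingle : fromEdgeSet {s(x, y)} ≤ G := by
      intro a b hab
      rw [fromEdgeSet_adj, Set.mem_singleton_iff, Sym2.eq_iff] at hab
      rcases hab.1 with ⟨rfl, rfl⟩ | ⟨rfl, rfl⟩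
      · exact hxy
      · exact hxy.symm
    have hT'le : T' ≤ G := sup_le (le_trans sdiff_le hle) hsingle
    have hadj' : T'.Adj x y := by
      rw [hT'def, sup_adj, fromEdgeSet_adj]
      exact Or.inr ⟨rfl, hne⟩
    have hr0 : T'.Reachable x₀ y₀ := by
      rcases reach_of_delete ((hconn.preconnected x x₀).some) (Or.inl rfl) with rx | rx <;>
      rcases reach_of_delete ((hconn.preconnected y x₀).some) (Or.inl rfl) with ry | ry
      · exact absurd (rx.trans ry.symm) hd
      · exact ((rx.mono le_sup_left).symm.trans hadj'.reachable).trans (ry.mono le_sup_left)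
      · exact ((ry.mono le_sup_left).symm.trans hadj'.reachable.symm).trans
          (rx.mono le_sup_left)
      · exact absurd (rx.trans ry.symm) hd
    have hT'conn : T'.Connected := connected_of_delete hconn le_sup_left hr0
    have hET' : T'.edgeSet = insert s(x, y) (T.edgeSet \ {s(x₀, y₀)}) := by
      rw [hT'def, edgeSet_sup, edgeSet_delete_edge hadjT, edgeSet_fromEdgeSet]
      ext e
      simp only [Set.mem_union, Set.mem_diff, Set.mem_singleton_iff, Set.mem_setOf_eq,
        Set.mem_insert_iff]
      constructor
      · rintro (h | ⟨h, -⟩)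
        · exact Or.inr h
        · exact Or.inl h
      · rintro (rfl | h)
        · exact Or.inr ⟨rfl, by simp [Sym2.isDiag_iff_proj_eq, hne]⟩
        · exact Or.inl h
    haveI : Fintype T.edgeSet := Fintype.ofFinite _
    have htree : T.IsTree := ⟨hconn, hac⟩
    have hcardT : T.edgeSet.ncard + 1 = Fintype.card V := by
      rw [Set.ncard_eq_toFinset_card']
      exact htree.card_edgeFinset
    have hposT : 0 < T.edgeSet.ncard := (Set.ncard_pos (T.edgeSet.toFinite)).mpr ⟨_, hfT⟩
    have hcardT' : T'.edgeSet.ncard = T.edgeSet.ncard := by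
      rw [hET', Set.ncard_insert_of_notMem (fun hc => hxyT hc.1),
        Set.ncard_diff_singleton_of_mem hfT]
      omega
    have hT'ac : T'.IsAcyclic := isAcyclic_of_card hT'conn (by omega)
    have hT' : IsSpanningTree G T' := ⟨hT'le, hT'conn, hT'ac⟩
    have hFeq : T'.edgeSet.toFinite.toFinset
        = insert s(x, y) ((T.edgeSet.toFinite.toFinset).erase s(x₀, y₀)) := by
      ext e
      simp only [Set.Finite.mem_toFinset, hET', Set.mem_insert_iff, Set.mem_diff,
        Set.mem_singleton_iff, Finset.mem_insert, Finset.mem_erase]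
      tauto
    have hwT' : treeWeight T' w
        = treeWeight T w - w s(x₀, y₀) + w s(x, y) := by
      rw [treeWeight, hFeq, Finset.sum_insert (by
        simp only [Finset.mem_erase, Set.Finite.mem_toFinset]
        exact fun hc => hxyT hc.2),
        Finset.sum_erase_eq_sub (by simp only [Set.Finite.mem_toFinset]; exact hfT)]
      rw [treeWeight]
      ring
    have := hmin T' hT'
    rw [hwT'] at this
    linarith

/-- Walking in `T` along light edges stays inside the percolation component. -/
lemma walk_stays_in_component {G T : SimpleGraph V} (hle : T ≤ G)
    (w : Sym2 V → ℝ) {u : ℝ} (c : (percolate G w u).ConnectedComponent) :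
    ∀ {x y : V} (p : T.Walk x y), (∀ e ∈ p.edges, w e ≤ u) → ∀ hx : x ∈ c.supp,
      ∃ hy : y ∈ c.supp, (T.induce c.supp).Reachable ⟨x, hx⟩ ⟨y, hy⟩ := by
  intro x y p
  induction p with
  | nil => exact fun _ hx => ⟨hx, Reachable.refl _⟩
  | @cons x z y h p ih =>
    intro hlight hx
    have hez : w s(x, z) ≤ u := hlight _ (by simp)
    have hPadj : (percolate G w u).Adj x z := (⟨hle h, hez⟩ : G.Adj x z ∧ w s(x, z) ≤ u)
    have hz : z ∈ c.supp := by
      rw [ConnectedComponent.mem_supp_iff] at hx ⊢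
      rw [← hx]
      exact ConnectedComponent.sound hPadj.reachable.symm
    obtain ⟨hy, hr⟩ := ih (fun e he => hlight e (by simp [he])) hz
    refine ⟨hy, Reachable.trans ?_ hr⟩
    exact Adj.reachable (by exact h : (T.induce c.supp).Adj ⟨x, hx⟩ ⟨z, hz⟩)

/-- Edge set of a mapped graph. -/
lemma edgeSet_map' {α β : Type*} (f : α ↪ β) (H : SimpleGraph α) :
    (SimpleGraph.map f H).edgeSet = Sym2.map f '' H.edgeSet := by
  ext e
  induction e using Sym2.ind with
  | _ a b =>
    rw [mem_edgeSet, map_adj]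
    constructor
    · rintro ⟨a', b', hab, rfl, rfl⟩
      exact ⟨s(a', b'), hab, rfl⟩
    · rintro ⟨e', he', heq⟩
      revert he' heq
      induction e' using Sym2.ind with
      | _ a' b' =>
        intro he' heq
        rw [Sym2.map_pair_eq, Sym2.eq_iff] at heq
        rw [mem_edgeSet] at he'
        rcases heq with ⟨rfl, rfl⟩ | ⟨rfl, rfl⟩
        · exact ⟨a', b', he', rfl, rfl⟩
        · exact ⟨b', a', he'.symm, rfl, rfl⟩

end MSTAux

open SimpleGraph MSTAux

theorem mst_restricted_to_percolation_component {V : Type*} [Fintype V]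
    (G : SimpleGraph V) (hG : G.Connected)
    (w : Sym2 V → ℝ) (hw : Set.InjOn w G.edgeSet)
    (T : SimpleGraph V) (hT : IsSpanningTree G T)
    (hmin : ∀ T' : SimpleGraph V, IsSpanningTree G T' →
      treeWeight T w ≤ treeWeight T' w)
    (u : ℝ) (c : (percolate G w u).ConnectedComponent) :
    IsSpanningTree (G.induce c.supp) (T.induce c.supp) ∧
      ∀ T'' : SimpleGraph c.supp, IsSpanningTree (G.induce c.supp) T'' →
        treeWeight (T.induce c.supp) (fun e => w (e.map (↑))) ≤
          treeWeight T'' (fun e => w (e.map (↑))) := by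
  classical
  -- light walks in `T` between percolation-reachable vertices
  have L1 : ∀ {x y : V}, (percolate G w u).Reachable x y →
      ∃ p : T.Walk x y, ∀ e ∈ p.edges, w e ≤ u := by
    intro x y hr
    obtain ⟨q⟩ := hr
    induction q with
    | nil => exact ⟨Walk.nil, by simp⟩
    | cons h q ih =>
      obtain ⟨p₁, hp₁⟩ := exists_light_tree_walk w hT hmin (h : G.Adj _ _ ∧ w s(_, _) ≤ u).1 (h : G.Adj _ _ ∧ w s(_, _) ≤ u).2
      obtain ⟨p₂, hp₂⟩ := ih
      refine ⟨p₁.append p₂, fun e he => ?_⟩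
      rw [Walk.edges_append, List.mem_append] at he
      rcases he with he | he
      · exact hp₁ e he
      · exact hp₂ e he
  -- Part 1 : T.induce c.supp is a spanning tree of G.induce c.supp
  have part1 : IsSpanningTree (G.induce c.supp) (T.induce c.supp) := by
    refine ⟨fun a b hab => hT.1 hab, ?_, ?_⟩
    · rw [connected_iff]
      constructor
      · rintro ⟨x, hx⟩ ⟨y, hy⟩
        have hrP : (percolate G w u).Reachable x y := by
          rw [ConnectedComponent.mem_supp_iff] at hx hy
          exact ConnectedComponent.exact (by rw [hx, hy])
        obtain ⟨p, hp⟩ := L1 hrP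
        obtain ⟨hy', hr⟩ := walk_stays_in_component hT.1 w c p hp hx
        exact hr
      · obtain ⟨v, hv⟩ := c.exists_rep
        exact ⟨⟨v, by rw [ConnectedComponent.mem_supp_iff]; exact hv⟩⟩
    · intro v cyc hcyc
      have hinj : Function.Injective
          ((SimpleGraph.Embedding.induce c.supp (G := T)).toHom : _ → V) :=
        Subtype.val_injective
      exact hT.2.2 _ ((Walk.map_isCycle_iff_of_injective hinj).mpr hcyc)
  refine ⟨part1, ?_⟩
  -- Part 2 : minimality
  intro T'' hT''
  haveI : Fintype ↥c.supp := Fintype.ofFinite _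
  set emb : ↥c.supp ↪ V := Function.Embedding.subtype _ with hembdef
  set Tin : SimpleGraph V := SimpleGraph.map emb (T.induce c.supp) with hTindef
  set T₂ : SimpleGraph V := (T \ Tin) ⊔ SimpleGraph.map emb T'' with hT₂def
  have hTin_adj : ∀ a b : V, Tin.Adj a b ↔ T.Adj a b ∧ a ∈ c.supp ∧ b ∈ c.supp := by
    intro a b
    rw [hTindef, map_adj]
    constructor
    · rintro ⟨a', b', hab, rfl, rfl⟩
      exact ⟨hab, a'.2, b'.2⟩
    · rintro ⟨hab, ha, hb⟩
      exact ⟨⟨a, ha⟩, ⟨b, hb⟩, hab, rfl, rfl⟩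
  have hTin_le : Tin ≤ T := fun a b hab => ((hTin_adj _ _).mp hab).1
  -- T₂ ≤ G
  have hmapT''_le : SimpleGraph.map emb T'' ≤ G := by
    rintro a b ⟨-, a', b', hab, rfl, rfl⟩
    exact hT''.1 hab
  have hT₂le : T₂ ≤ G := sup_le (le_trans sdiff_le hT.1) hmapT''_le
  -- T₂ connected
  have hkey : ∀ {a b : V}, T.Walk a b → T₂.Reachable a b := by
    intro a b p
    induction p with
    | nil => exact Reachable.refl _
    | @cons a z b h q ih =>
      refine Reachable.trans ?_ ih
      by_cases hin : a ∈ c.supp ∧ z ∈ c.supp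
      · have hr'' : T''.Reachable ⟨a, hin.1⟩ ⟨z, hin.2⟩ :=
          hT''.2.1.preconnected _ _
        let f : T'' →g T₂ := ⟨fun v => (v : V), by
          intro p q hpq
          rw [hT₂def, sup_adj]
          exact Or.inr ⟨fun h => hpq.ne (Subtype.ext h), p, q, hpq, rfl, rfl⟩⟩
        exact hr''.map f
      · refine Adj.reachable ?_
        rw [hT₂def, sup_adj, sdiff_adj]
        exact Or.inl ⟨h, fun hc => hin ⟨((hTin_adj _ _).mp hc).2.1, ((hTin_adj _ _).mp hc).2.2⟩⟩
  have hT₂conn : T₂.Connected := by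
    rw [connected_iff]
    exact ⟨fun a b => hkey (hT.2.1.preconnected a b).some, hG.nonempty⟩
  -- edge sets
  have hembval : ⇑emb = (Subtype.val : ↥c.supp → V) := rfl
  have hinj2 : Function.Injective (Sym2.map ⇑emb) :=
    Sym2.map.injective (hembval ▸ Subtype.val_injective)
  have hETin : Tin.edgeSet = Sym2.map ⇑emb '' (T.induce c.supp).edgeSet :=
    edgeSet_map' emb _
  have hET₂ : T₂.edgeSet = (T.edgeSet \ Tin.edgeSet) ∪ Sym2.map ⇑emb '' T''.edgeSet := by
    rw [hT₂def, edgeSet_sup, edgeSet_sdiff, edgeSet_map' emb T'']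
  have hWsub : Tin.edgeSet ⊆ T.edgeSet := edgeSet_subset_edgeSet.mpr hTin_le
  -- every edge in the image of T'' has both endpoints in c.supp, hence disjointness
  have hdisj : Disjoint (T.edgeSet \ Tin.edgeSet) (Sym2.map ⇑emb '' T''.edgeSet) := by
    rw [Set.disjoint_left]
    rintro e ⟨heT, heTin⟩ ⟨e', he', rfl⟩
    revert he' heT heTin
    induction e' using Sym2.ind with
    | _ a' b' =>
      intro he' heT heTin
      exact heTin ((hTin_adj _ _).mpr ⟨heT, a'.2, b'.2⟩)
  -- cardinalities
  haveI : Fintype T.edgeSet := Fintype.ofFinite _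
  haveI : Fintype (T.induce c.supp).edgeSet := Fintype.ofFinite _
  haveI : Fintype T''.edgeSet := Fintype.ofFinite _
  have hcT : T.edgeSet.ncard + 1 = Fintype.card V := by
    rw [Set.ncard_eq_toFinset_card']
    exact (⟨hT.2.1, hT.2.2⟩ : T.IsTree).card_edgeFinset
  have hcIn : (T.induce c.supp).edgeSet.ncard + 1 = Fintype.card ↥c.supp := by
    rw [Set.ncard_eq_toFinset_card']
    exact (⟨part1.2.1, part1.2.2⟩ : (T.induce c.supp).IsTree).card_edgeFinset
  have hcT'' : T''.edgeSet.ncard + 1 = Fintype.card ↥c.supp := by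
    rw [Set.ncard_eq_toFinset_card']
    exact (⟨hT''.2.1, hT''.2.2⟩ : T''.IsTree).card_edgeFinset
  have hcTin : Tin.edgeSet.ncard = (T.induce c.supp).edgeSet.ncard := by
    rw [hETin, Set.ncard_image_of_injective _ hinj2]
  have hcImg : (Sym2.map ⇑emb '' T''.edgeSet).ncard = T''.edgeSet.ncard :=
    Set.ncard_image_of_injective _ hinj2
  have hcle : Tin.edgeSet.ncard ≤ T.edgeSet.ncard :=
    Set.ncard_le_ncard hWsub (T.edgeSet.toFinite)
  have hcT₂ : T₂.edgeSet.ncard =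
      (T.edgeSet.ncard - Tin.edgeSet.ncard) + T''.edgeSet.ncard := by
    rw [hET₂, Set.ncard_union_eq hdisj ((T.edgeSet.toFinite).subset Set.diff_subset)
      ((T''.edgeSet.toFinite).image _), Set.ncard_diff hWsub, hcImg]
  have hT₂ac : T₂.IsAcyclic := isAcyclic_of_card hT₂conn (by omega)
  have hsp₂ : IsSpanningTree G T₂ := ⟨hT₂le, hT₂conn, hT₂ac⟩
  have hle₂ := hmin T₂ hsp₂
  -- weight computations
  have hFsub : Tin.edgeSet.toFinite.toFinset ⊆ T.edgeSet.toFinite.toFinset := by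
    intro e he
    rw [Set.Finite.mem_toFinset] at he ⊢
    exact hWsub he
  have hsum1 : treeWeight T w =
      ∑ e ∈ T.edgeSet.toFinite.toFinset \ Tin.edgeSet.toFinite.toFinset, w e +
      ∑ e ∈ Tin.edgeSet.toFinite.toFinset, w e := by
    rw [treeWeight, ← Finset.sum_sdiff hFsub]
  have hFTin : Tin.edgeSet.toFinite.toFinset =
      (T.induce c.supp).edgeSet.toFinite.toFinset.image (Sym2.map ⇑emb) := by
    ext e
    simp only [Set.Finite.mem_toFinset, hETin, Finset.mem_image, Set.mem_image]
  have hsum2 : ∑ e ∈ Tin.edgeSet.toFinite.toFinset, w e =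
      treeWeight (T.induce c.supp) (fun e => w (e.map (↑))) := by
    rw [hFTin, Finset.sum_image (fun x _ y _ h => hinj2 h)]
    simp only [treeWeight, hembval]
  have hFT₂ : T₂.edgeSet.toFinite.toFinset =
      (T.edgeSet.toFinite.toFinset \ Tin.edgeSet.toFinite.toFinset) ∪
        T''.edgeSet.toFinite.toFinset.image (Sym2.map ⇑emb) := by
    ext e
    simp only [Set.Finite.mem_toFinset, hET₂, Finset.mem_union, Finset.mem_sdiff,
      Finset.mem_image, Set.mem_union, Set.mem_diff, Set.mem_image]
  have hfdisj : Disjoint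
      (T.edgeSet.toFinite.toFinset \ Tin.edgeSet.toFinite.toFinset)
      (T''.edgeSet.toFinite.toFinset.image (Sym2.map ⇑emb)) := by
    rw [Finset.disjoint_left]
    rintro e he hc
    rw [Finset.mem_sdiff, Set.Finite.mem_toFinset, Set.Finite.mem_toFinset] at he
    rw [Finset.mem_image] at hc
    obtain ⟨e', he', rfl⟩ := hc
    rw [Set.Finite.mem_toFinset] at he'
    exact (Set.disjoint_left.mp hdisj ⟨he.1, he.2⟩) ⟨e', he', rfl⟩
  have hsum3 : treeWeight T₂ w =
      ∑ e ∈ T.edgeSet.toFinite.toFinset \ Tin.edgeSet.toFinite.toFinset, w e +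
      treeWeight T'' (fun e => w (e.map (↑))) := by
    rw [treeWeight, hFT₂, Finset.sum_union hfdisj,
      Finset.sum_image (fun x _ y _ h => hinj2 h)]
    simp only [treeWeight, hembval]
  rw [hsum1, hsum2, hsum3] at hle₂
  linarith
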